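/- The function q : ℝ → ℝ defined by q(t) = (e^{−t} + t − 1)/t² for t ≠ 0 and q(0) = 1/2 is nonincreasing on ℝ: for all real s ≤ t, q(s) ≥ q(t). -/

import Mathlib

open Real

private lemma q_integrable (t : ℝ) :
    IntervalIntegrable (fun u : ℝ => (1 - u) * Real.exp (-t * u))
      MeasureTheory.volume 0 1 := by
  apply Continuous.intervalIntegrable
  continuity

private lemma q_int_eq (t : ℝ) (ht : t ≠ 0) :
    (∫ u in (0:ℝ)..1, (1 - u) * Real.exp (-t * u))
      = (Real.exp (-t) + t - 1) / t ^ 2 := by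
  have key : ∀ u : ℝ, HasDerivAt (fun u : ℝ => (u / t + (1 - t) / t ^ 2) * Real.exp (-t * u))
      ((1 - u) * Real.exp (-t * u)) u := by
    intro u
    have h1 : HasDerivAt (fun u : ℝ => u / t + (1 - t) / t ^ 2) (1 / t) u := by
      simpa using ((hasDerivAt_id u).div_const t).add_const ((1 - t) / t ^ 2)
    have h2 : HasDerivAt (fun u : ℝ => Real.exp (-t * u)) (Real.exp (-t * u) * (-t)) u := by
      have : HasDerivAt (fun u : ℝ => -t * u) (-t) u := by
        simpa using (hasDerivAt_id u).const_mul (-t)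
      simpa using this.exp
    have := h1.mul h2
    refine this.congr_deriv ?_
    field_simp
    ring
  rw [intervalIntegral.integral_eq_sub_of_hasDerivAt (fun u _ => key u)
    (q_integrable t)]
  field_simp
  simp only [mul_zero, neg_zero, Real.exp_zero]
  ring

private lemma q_int_zero :
    (∫ u in (0:ℝ)..1, (1 - u) * Real.exp (-(0:ℝ) * u)) = 1 / 2 := by
  simp only [neg_zero, zero_mul, Real.exp_zero, mul_one]
  have : (fun u : ℝ => 1 - u) = fun u : ℝ => (1 : ℝ) - id u := rfl
  rw [this, intervalIntegral.integral_sub intervalIntegrable_const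
    (Continuous.intervalIntegrable continuous_id 0 1)]
  simp [integral_id]
  norm_num

private lemma q_int_mono {s t : ℝ} (hst : s ≤ t) :
    (∫ u in (0:ℝ)..1, (1 - u) * Real.exp (-t * u))
      ≤ (∫ u in (0:ℝ)..1, (1 - u) * Real.exp (-s * u)) := by
  apply intervalIntegral.integral_mono_on (by norm_num) (q_integrable t) (q_integrable s)
  intro u hu
  rcases Set.mem_Icc.mp hu with ⟨h0, h1⟩
  have h1u : (0:ℝ) ≤ 1 - u := by linarith
  apply mul_le_mul_of_nonneg_left _ h1u
  exact Real.exp_le_exp.mpr (by nlinarith)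

/-- The function `q(t) = φ(t)/t² = (e^{-t} + t - 1)/t²` (extended by `1/2` at `0`)
is nonincreasing on all of `ℝ`. -/
theorem phi_div_sq_antitone :
    ∀ s t : ℝ, s ≤ t →
      (if t = 0 then (1:ℝ)/2 else (Real.exp (-t) + t - 1) / t ^ 2)
        ≤ (if s = 0 then (1:ℝ)/2 else (Real.exp (-s) + s - 1) / s ^ 2) := by
  intro s t hst
  have hq : ∀ r : ℝ, (if r = 0 then (1:ℝ)/2 else (Real.exp (-r) + r - 1) / r ^ 2)
      = ∫ u in (0:ℝ)..1, (1 - u) * Real.exp (-r * u) := by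
    intro r
    by_cases hr : r = 0
    · rw [if_pos hr, hr]
      exact q_int_zero.symm
    · rw [if_neg hr]
      exact (q_int_eq r hr).symm
  rw [hq s, hq t]
  exact q_int_mono hst
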